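/- arXiv:1812.11781 — 2 statements merged into one kernel-verified Lean document; each statement's English description precedes it below -/
import Mathlib

section
/- The function G(α) = ∫₀^{1/2} (1 − z)^{-2} z^{-α} dz satisfies G(α) = 1 + 2 ln 2 · α + o(α) as α → 0⁺, i.e., lim_{α → 0⁺} (G(α) − 1)/α = 2 ln 2. -/
open MeasureTheory ENNReal Set Filter Topology

/-- A Young–Orlicz function: even, continuous, convex, non-negative, strictly increasing to
infinity on `[0, ∞)`, with `N u / u → 0` as `u → 0⁺` and `N u / u → ∞` as `u → ∞`. -/
structure IsYoungOrlicz (N : ℝ → ℝ) : Prop where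
  even : ∀ u, N (-u) = N u
  continuous : Continuous N
  convexOn : ConvexOn ℝ Set.univ N
  nonneg : ∀ u, 0 ≤ N u
  strictMonoOn : StrictMonoOn N (Set.Ici 0)
  tendsto_atTop : Filter.Tendsto N Filter.atTop Filter.atTop
  tendsto_div_zero : Filter.Tendsto (fun u => N u / u) (nhdsWithin 0 (Set.Ioi 0)) (nhds 0)
  tendsto_div_atTop : Filter.Tendsto (fun u => N u / u) Filter.atTop Filter.atTop

/-- A measure is atomless if every set of positive measure has a measurable subset of strictly
smaller positive measure. -/
def Atomless {X : Type*} [MeasurableSpace X] (μ : MeasureTheory.Measure X) : Prop :=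
  ∀ s : Set X, MeasurableSet s → 0 < μ s →
    ∃ t : Set X, MeasurableSet t ∧ t ⊆ s ∧ 0 < μ t ∧ μ t < μ s

/-- The tail function `T[f](t) = μ {x : |f x| ≥ t}`. -/
noncomputable def tailFun {X : Type*} [MeasurableSpace X] (μ : MeasureTheory.Measure X)
    (f : X → ℝ) (t : ℝ) : ℝ≥0∞ :=
  μ {x | t ≤ |f x|}

/-- `V[N](t) = min (μ X) (1 / N t)` (computed in `ℝ≥0∞`, so `1/0 = ∞`). -/
noncomputable def Vfun {X : Type*} [MeasurableSpace X] (μ : MeasureTheory.Measure X)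
    (N : ℝ → ℝ) (t : ℝ) : ℝ≥0∞ :=
  min (μ Set.univ) (ENNReal.ofReal (N t))⁻¹

/-- The strong (Luxemburg) Orlicz norm, with value `∞` when `f ∉ sL(N)`. -/
noncomputable def strongNorm {X : Type*} [MeasurableSpace X] (μ : MeasureTheory.Measure X)
    (N : ℝ → ℝ) (f : X → ℝ) : ℝ≥0∞ :=
  sInf (ENNReal.ofReal ''
    {k : ℝ | 0 < k ∧ ∫⁻ x, ENNReal.ofReal (N (|f x| / k)) ∂μ ≤ 1})

/-- The weak Orlicz (tail) norm `‖f‖_{wL(N)} = inf {K > 0 : ∀ t > 0, T[f](t) ≤ V[N](t/K)}`,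
with value `∞` when `f ∉ wL(N)`. -/
noncomputable def weakNorm {X : Type*} [MeasurableSpace X] (μ : MeasureTheory.Measure X)
    (N : ℝ → ℝ) (f : X → ℝ) : ℝ≥0∞ :=
  sInf (ENNReal.ofReal ''
    {K : ℝ | 0 < K ∧ ∀ t > 0, tailFun μ f t ≤ Vfun μ N (t / K)})

/-- `Y(N) = sup { ‖f‖_{sL(N)} / ‖f‖_{wL(N)} : f ∈ wL(N), f ≠ 0 }`. -/
noncomputable def Ynorm {X : Type*} [MeasurableSpace X] (μ : MeasureTheory.Measure X)
    (N : ℝ → ℝ) : ℝ≥0∞ :=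
  ⨆ (f : X → ℝ) (_ : Measurable f) (_ : ¬ f =ᵐ[μ] (0 : X → ℝ))
    (_ : weakNorm μ N f ≠ ⊤), strongNorm μ N f / weakNorm μ N f

/-- The (generalized) inverse of a Young–Orlicz function on `[0, ∞)`. -/
noncomputable def Ninv (N : ℝ → ℝ) (w : ℝ) : ℝ :=
  sInf {u : ℝ | 0 ≤ u ∧ w ≤ N u}

/-- `Q[N](k) = ∫_{y₀}^∞ N(y/k) |d(1/N(y))| = ∫_{1/μ(X)}^∞ N(N⁻¹(w)/k) w⁻² dw`. -/
noncomputable def Qfun {X : Type*} [MeasurableSpace X] (μ : MeasureTheory.Measure X)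
    (N : ℝ → ℝ) (k : ℝ) : ℝ≥0∞ :=
  ∫⁻ w in Set.Ioi ((μ Set.univ)⁻¹.toReal), ENNReal.ofReal (N (Ninv N w / k) / w ^ 2)

/-- `G(α) = ∫₀^{1/2} (1 - z)⁻² z^{-α} dz`. -/
noncomputable def Gfun (α : ℝ) : ℝ≥0∞ :=
  ∫⁻ z in Set.Ioo (0 : ℝ) (1/2), ENNReal.ofReal ((1 - z) ^ (-(2:ℝ)) * z ^ (-α))


/-- integrability on `Ioo 0 (1/2)` from a power bound -/
lemma aux_integrableOn {f : ℝ → ℝ} (hf : ContinuousOn f (Ioo 0 (1/2)))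
    {C r : ℝ} (hr : -1 < r) (hb : ∀ z ∈ Ioo (0:ℝ) (1/2), |f z| ≤ C * z ^ r) :
    IntegrableOn f (Ioo 0 (1/2)) := by
  have h0 : IntervalIntegrable (fun x : ℝ => x ^ r) volume 0 (1/2) :=
    intervalIntegral.intervalIntegrable_rpow' hr
  rw [intervalIntegrable_iff_integrableOn_Ioc_of_le (by norm_num)] at h0
  have hg : IntegrableOn (fun z : ℝ => C * z ^ r) (Ioo 0 (1/2)) :=
    (h0.mono_set Ioo_subset_Ioc_self).const_mul C
  refine Integrable.mono' hg (hf.aestronglyMeasurable measurableSet_Ioo) ?_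
  filter_upwards [ae_restrict_mem measurableSet_Ioo] with z hz
  simpa [Real.norm_eq_abs] using hb z hz

lemma aux_log_bound {z : ℝ} (h0 : 0 < z) : -Real.log z ≤ 4 * z ^ (-(1/4 : ℝ)) := by
  have h1 : Real.log (z ^ (-(1/4:ℝ))) ≤ z ^ (-(1/4:ℝ)) - 1 :=
    Real.log_le_sub_one_of_pos (Real.rpow_pos_of_pos h0 _)
  rw [Real.log_rpow h0] at h1
  nlinarith [Real.rpow_pos_of_pos h0 (-(1/4:ℝ))]

lemma aux_rpow_neg_two {x : ℝ} (hx : 0 < x) : x ^ (-(2:ℝ)) = (x ^ 2)⁻¹ := by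
  rw [Real.rpow_neg hx.le, show ((2:ℝ)) = ((2:ℕ):ℝ) by norm_num, Real.rpow_natCast]

lemma aux_rpow_neg_two_le {z : ℝ} (hz : z ∈ Ioo (0:ℝ) (1/2)) : (1 - z) ^ (-(2:ℝ)) ≤ 4 := by
  have h1 : (0:ℝ) < 1 - z := by have := hz.2; linarith
  rw [aux_rpow_neg_two h1]
  rw [inv_le_iff_one_le_mul₀ (by positivity)]
  nlinarith [hz.1, hz.2]


lemma aux_slope_nonneg {z α : ℝ} (hz : z ∈ Ioo (0:ℝ) (1/2)) (hα : 0 < α) :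
    0 ≤ (z ^ (-α) - 1) / α := by
  have h1 : (1:ℝ) ≤ z ^ (-α) := by
    have := Real.rpow_le_rpow_of_exponent_ge hz.1 (by linarith [hz.2]) (by linarith : -α ≤ 0)
    simpa [Real.rpow_zero] using this
  apply div_nonneg (by linarith) hα.le

lemma aux_slope_bound {z α : ℝ} (hz : z ∈ Ioo (0:ℝ) (1/2)) (hα : α ∈ Ioo (0:ℝ) (1/2)) :
    (z ^ (-α) - 1) / α ≤ (-Real.log z) * z ^ (-(1/2:ℝ)) := by
  obtain ⟨hz0, hz1⟩ := hz
  have hlog : Real.log z < 0 := Real.log_neg hz0 (by linarith)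
  set x := -α * Real.log z with hx
  have hxpos : 0 < x := mul_pos_of_neg_of_neg (by linarith [hα.1]) hlog
  have hzα : z ^ (-α) = Real.exp x := by
    rw [Real.rpow_def_of_pos hz0, hx]; ring_nf
  -- e^x - 1 ≤ x e^x
  have key : Real.exp x - 1 ≤ x * Real.exp x := by
    have h1 : (-x) + 1 ≤ Real.exp (-x) := Real.add_one_le_exp _
    have h2 : Real.exp (-x) * Real.exp x = 1 := by
      rw [← Real.exp_add]; simp
    nlinarith [Real.exp_pos x]
  have hdiv : (z ^ (-α) - 1) / α ≤ (-Real.log z) * z ^ (-α) := by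
    rw [hzα, div_le_iff₀ hα.1]
    calc Real.exp x - 1 ≤ x * Real.exp x := key
      _ = -Real.log z * Real.exp x * α := by rw [hx]; ring
  refine hdiv.trans ?_
  have : z ^ (-α) ≤ z ^ (-(1/2:ℝ)) :=
    Real.rpow_le_rpow_of_exponent_ge hz0 (by linarith) (by linarith [hα.2])
  exact mul_le_mul_of_nonneg_left this (by linarith)


lemma aux_integral_one :
    ∫ z in Ioo (0:ℝ) (1/2), (1 - z) ^ (-(2:ℝ)) = 1 := by
  have hpos : ∀ z ∈ uIcc (0:ℝ) (1/2), (0:ℝ) < 1 - z := by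
    intro z hz
    rw [uIcc_of_le (by norm_num)] at hz
    have := hz.2; norm_num at this ⊢; linarith
  have heq : EqOn (fun z : ℝ => (1 - z) ^ (-(2:ℝ))) (fun z => ((1-z)^2)⁻¹)
      (uIcc (0:ℝ) (1/2)) := fun z hz => aux_rpow_neg_two (hpos z hz)
  rw [← integral_Ioc_eq_integral_Ioo, ← intervalIntegral.integral_of_le (by norm_num : (0:ℝ) ≤ 1/2)]
  rw [intervalIntegral.integral_congr heq]
  have hderiv : ∀ z ∈ uIcc (0:ℝ) (1/2),
      HasDerivAt (fun z : ℝ => (1 - z)⁻¹) (((1-z)^2)⁻¹) z := by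
    intro z hz
    have h2 : HasDerivAt (fun z : ℝ => 1 - z) (-1) z := (hasDerivAt_id z).const_sub 1
    have := h2.inv (ne_of_gt (hpos z hz))
    exact this.congr_deriv (by simp)
  have hint : IntervalIntegrable (fun z : ℝ => ((1-z)^2)⁻¹) volume 0 (1/2) := by
    apply ContinuousOn.intervalIntegrable
    exact ContinuousOn.inv₀ (by fun_prop) (fun z hz => pow_ne_zero 2 (ne_of_gt (hpos z hz)))
  rw [intervalIntegral.integral_eq_sub_of_hasDerivAt hderiv hint]
  norm_num

lemma aux_integral_log :
    ∫ z in Ioo (0:ℝ) (1/2), (1 - z) ^ (-(2:ℝ)) * (-Real.log z) = 2 * Real.log 2 := by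
  have hpos : ∀ z ∈ Icc (0:ℝ) (1/2), (0:ℝ) < 1 - z := by
    intro z hz; have := hz.2; linarith
  set F : ℝ → ℝ := fun z => -(z * Real.log z) / (1 - z) - Real.log (1 - z) with hF
  have hcont : ContinuousOn F (Icc (0:ℝ) (1/2)) := by
    apply ContinuousOn.sub
    · exact (Real.continuous_mul_log.neg.continuousOn).div
        ((continuous_const.sub continuous_id).continuousOn)
        (fun z hz => ne_of_gt (hpos z hz))
    · apply ContinuousOn.comp Real.continuousOn_log
        ((continuous_const.sub continuous_id).continuousOn)
      intro z hz
      exact ne_of_gt (hpos z hz)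
  have hderiv : ∀ z ∈ Ioo (0:ℝ) (1/2),
      HasDerivAt F ((1 - z) ^ (-(2:ℝ)) * (-Real.log z)) z := by
    intro z hz
    have h1z : (0:ℝ) < 1 - z := by have := hz.2; linarith
    have h1 : HasDerivAt (fun z : ℝ => z * Real.log z) (Real.log z + 1) z :=
      Real.hasDerivAt_mul_log (ne_of_gt hz.1)
    have h2 : HasDerivAt (fun z : ℝ => 1 - z) (-1) z := (hasDerivAt_id z).const_sub 1
    have h3 := (h1.neg.div h2 (ne_of_gt h1z))
    have h4 := h2.log (ne_of_gt h1z)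
    have h5 := h3.sub h4
    refine h5.congr_deriv ?_
    rw [aux_rpow_neg_two h1z]
    simp only [Pi.neg_apply]
    field_simp
    ring
  have hint : IntervalIntegrable (fun z : ℝ => (1 - z) ^ (-(2:ℝ)) * (-Real.log z))
      volume 0 (1/2) := by
    rw [intervalIntegrable_iff_integrableOn_Ioc_of_le (by norm_num),
      integrableOn_Ioc_iff_integrableOn_Ioo]
    apply aux_integrableOn
    · apply ContinuousOn.mul
      · intro z hz
        have h1z : (1:ℝ) - z ≠ 0 := by have := hz.2; norm_num at this ⊢; intro h; linarith
        exact ((Real.continuousAt_rpow_const _ _ (Or.inl h1z)).comp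
          ((continuous_const.sub continuous_id).continuousAt)).continuousWithinAt
      · exact (Real.continuousOn_log.mono (fun z hz => ne_of_gt hz.1)).neg
    · exact (by norm_num : (-1:ℝ) < -(3/4))
    · intro z hz
      have h2 := aux_rpow_neg_two_le hz
      have h3 := aux_log_bound hz.1
      have hlog : 0 ≤ -Real.log z := by
        have := Real.log_nonpos hz.1.le (by linarith [hz.2]); linarith
      have hpow : (0:ℝ) < 1 - z := by have := hz.2; linarith
      have h0 : 0 ≤ (1 - z) ^ (-(2:ℝ)) := (Real.rpow_pos_of_pos hpow _).le
      rw [abs_of_nonneg (mul_nonneg h0 hlog)]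
      calc (1 - z) ^ (-(2:ℝ)) * (-Real.log z) ≤ 4 * (4 * z ^ (-(1/4:ℝ))) := by
            apply mul_le_mul h2 h3 hlog (by norm_num)
        _ ≤ 16 * z ^ (-(3/4:ℝ)) := by
            rw [show (16:ℝ) * z ^ (-(3/4:ℝ)) = 16 * z ^ (-(3/4:ℝ)) from rfl]
            have : z ^ (-(1/4:ℝ)) ≤ z ^ (-(3/4:ℝ)) :=
              Real.rpow_le_rpow_of_exponent_ge hz.1 (by linarith [hz.2]) (by norm_num)
            linarith [Real.rpow_pos_of_pos hz.1 (-(1/4:ℝ))]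
  rw [← integral_Ioc_eq_integral_Ioo, ← intervalIntegral.integral_of_le (by norm_num : (0:ℝ) ≤ 1/2)]
  rw [intervalIntegral.integral_eq_sub_of_hasDerivAt_of_le (by norm_num) hcont hderiv hint]
  have : F (1/2) = 2 * Real.log 2 := by
    simp only [hF]
    rw [show (1:ℝ) - 1/2 = 1/2 by norm_num, show Real.log (1/2) = -Real.log 2 by
      rw [one_div, Real.log_inv]]
    ring
  have hF0 : F 0 = 0 := by simp [hF]
  rw [this, hF0, sub_zero]

lemma aux_cont_factor : ContinuousOn (fun z : ℝ => (1 - z) ^ (-(2:ℝ))) (Ioo 0 (1/2)) := by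
  intro z hz
  have h1z : (1:ℝ) - z ≠ 0 := by have := hz.2; norm_num at this ⊢; intro h; linarith
  exact ((Real.continuousAt_rpow_const _ _ (Or.inl h1z)).comp
    ((continuous_const.sub continuous_id).continuousAt)).continuousWithinAt

lemma aux_cont_rpow (α : ℝ) : ContinuousOn (fun z : ℝ => z ^ (-α)) (Ioo 0 (1/2)) :=
  fun z hz =>
    (Real.continuousAt_rpow_const _ _ (Or.inl (ne_of_gt hz.1))).continuousWithinAt

lemma aux_g_integrable {α : ℝ} (hα : α ∈ Icc (0:ℝ) (1/2)) :
    IntegrableOn (fun z : ℝ => (1 - z) ^ (-(2:ℝ)) * z ^ (-α)) (Ioo 0 (1/2)) := by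
  apply aux_integrableOn (aux_cont_factor.mul (aux_cont_rpow α))
    (show (-1:ℝ) < -(1/2) by norm_num)
  intro z hz
  have h1 : (0:ℝ) < 1 - z := by have := hz.2; linarith
  have h0 : 0 ≤ (1 - z) ^ (-(2:ℝ)) := (Real.rpow_pos_of_pos h1 _).le
  have h2 : 0 ≤ z ^ (-α) := (Real.rpow_pos_of_pos hz.1 _).le
  simp only [Pi.mul_apply]
  rw [abs_of_nonneg (mul_nonneg h0 h2)]
  exact mul_le_mul (aux_rpow_neg_two_le hz)
    (Real.rpow_le_rpow_of_exponent_ge hz.1 (by linarith [hz.2]) (by linarith [hα.2])) h2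
    (by norm_num)

lemma aux_Gfun_toReal {α : ℝ} (hα : α ∈ Icc (0:ℝ) (1/2)) :
    (Gfun α).toReal = ∫ z in Ioo (0:ℝ) (1/2), (1 - z) ^ (-(2:ℝ)) * z ^ (-α) := by
  rw [Gfun]
  rw [MeasureTheory.integral_eq_lintegral_of_nonneg_ae ?h1 ?h2]
  case h1 =>
    filter_upwards [ae_restrict_mem measurableSet_Ioo] with z hz
    have h1 : (0:ℝ) < 1 - z := by have := hz.2; linarith
    exact mul_nonneg (Real.rpow_pos_of_pos h1 _).le (Real.rpow_pos_of_pos hz.1 _).le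
  case h2 =>
    exact (aux_cont_factor.mul (aux_cont_rpow α)).aestronglyMeasurable measurableSet_Ioo

theorem Gfun_asymptotic_zero :
    Filter.Tendsto (fun α : ℝ => ((Gfun α).toReal - 1) / α)
      (nhdsWithin 0 (Set.Ioi 0)) (nhds (2 * Real.log 2)) := by
  have hmem : Ioo (0:ℝ) (1/2) ∈ 𝓝[>] (0:ℝ) :=
    Ioo_mem_nhdsGT_of_mem ⟨le_refl 0, by norm_num⟩
  -- reduce to integrals of difference quotients
  have heq : ∀ᶠ α in 𝓝[>] (0:ℝ), ((Gfun α).toReal - 1) / α =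
      ∫ z in Ioo (0:ℝ) (1/2), (1 - z) ^ (-(2:ℝ)) * ((z ^ (-α) - 1) / α) := by
    filter_upwards [hmem] with α hα
    have h1 := aux_Gfun_toReal (α := α) ⟨hα.1.le, hα.2.le⟩
    have hONE : (∫ z in Ioo (0:ℝ) (1/2), (1 - z) ^ (-(2:ℝ)) * z ^ (-(0:ℝ))) = 1 := by
      have hc : (∫ z in Ioo (0:ℝ) (1/2), (1 - z) ^ (-(2:ℝ)) * z ^ (-(0:ℝ)))
          = ∫ z in Ioo (0:ℝ) (1/2), (1 - z) ^ (-(2:ℝ)) :=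
        integral_congr_ae (Eventually.of_forall fun z => by
          simp only [neg_zero, Real.rpow_zero, mul_one])
      rw [hc, aux_integral_one]
    calc ((Gfun α).toReal - 1) / α
        = ((∫ z in Ioo (0:ℝ) (1/2), (1 - z) ^ (-(2:ℝ)) * z ^ (-α)) -
           (∫ z in Ioo (0:ℝ) (1/2), (1 - z) ^ (-(2:ℝ)) * z ^ (-(0:ℝ)))) / α := by
          rw [h1, hONE]
      _ = ∫ z in Ioo (0:ℝ) (1/2), (1 - z) ^ (-(2:ℝ)) * ((z ^ (-α) - 1) / α) := by
          rw [← integral_sub (aux_g_integrable ⟨hα.1.le, hα.2.le⟩)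
            (aux_g_integrable ⟨le_refl 0, by norm_num⟩), ← integral_div]
          apply integral_congr_ae (Eventually.of_forall fun z => ?_)
          simp only [neg_zero, Real.rpow_zero]
          ring
  rw [Filter.tendsto_congr' heq, ← aux_integral_log]
  -- dominated convergence
  apply MeasureTheory.tendsto_integral_filter_of_dominated_convergence
    (bound := fun z : ℝ => 16 * z ^ (-(3/4:ℝ)))
  · filter_upwards [hmem] with α hα
    refine ContinuousOn.aestronglyMeasurable ?_ measurableSet_Ioo
    exact aux_cont_factor.mul (((aux_cont_rpow α).sub continuousOn_const).div_const α)
  · filter_upwards [hmem] with α hα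
    filter_upwards [ae_restrict_mem measurableSet_Ioo] with z hz
    have h1 : (0:ℝ) < 1 - z := by have := hz.2; linarith
    have h0 : 0 ≤ (1 - z) ^ (-(2:ℝ)) := (Real.rpow_pos_of_pos h1 _).le
    have hs0 := aux_slope_nonneg hz hα.1
    rw [Real.norm_eq_abs, abs_of_nonneg (mul_nonneg h0 hs0)]
    have hlog : 0 ≤ -Real.log z := by
      have := Real.log_nonpos hz.1.le (by linarith [hz.2]); linarith
    calc (1 - z) ^ (-(2:ℝ)) * ((z ^ (-α) - 1) / α)
        ≤ 4 * ((-Real.log z) * z ^ (-(1/2:ℝ))) :=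
          mul_le_mul (aux_rpow_neg_two_le hz) (aux_slope_bound hz hα) hs0 (by norm_num)
      _ ≤ 4 * ((4 * z ^ (-(1/4:ℝ))) * z ^ (-(1/2:ℝ))) := by
          have := aux_log_bound hz.1
          have h2 : 0 ≤ z ^ (-(1/2:ℝ)) := (Real.rpow_pos_of_pos hz.1 _).le
          nlinarith
      _ = 16 * z ^ (-(3/4:ℝ)) := by
          rw [show (16:ℝ) * z ^ (-(3/4:ℝ)) = 16 * (z ^ (-(1/4:ℝ)) * z ^ (-(1/2:ℝ))) from by
            rw [← Real.rpow_add hz.1]; norm_num]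
          ring
  · apply aux_integrableOn (C := 16) (continuousOn_const.mul (aux_cont_rpow (3/4)))
      (show (-1:ℝ) < -(3/4) by norm_num)
    intro z hz
    simp only [Pi.mul_apply]
    rw [abs_of_nonneg (mul_nonneg (by norm_num) (Real.rpow_pos_of_pos hz.1 _).le)]
  · filter_upwards [ae_restrict_mem measurableSet_Ioo] with z hz
    have h1 : (0:ℝ) < 1 - z := by have := hz.2; linarith
    set c : ℝ := -Real.log z with hc
    have hexp : HasDerivAt (fun α : ℝ => Real.exp (c * α)) c 0 := by
      have := ((hasDerivAt_id (0:ℝ)).const_mul c).exp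
      simpa using this
    have hslope := hasDerivAt_iff_tendsto_slope.mp hexp
    have hmono : 𝓝[>] (0:ℝ) ≤ 𝓝[≠] (0:ℝ) :=
      nhdsWithin_mono 0 (fun x hx => ne_of_gt hx)
    have htends : Tendsto (fun α : ℝ => (z ^ (-α) - 1) / α) (𝓝[>] (0:ℝ)) (𝓝 c) := by
      refine ((hslope.mono_left hmono).congr' ?_)
      filter_upwards [self_mem_nhdsWithin] with α hα
      have : z ^ (-α) = Real.exp (c * α) := by
        rw [Real.rpow_def_of_pos hz.1, hc]; ring_nf
      simp [slope_def_field, this]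
    exact (htends.const_mul _)
end

section
/- For a probability measure and N^{(m)}(u) = exp(|u|^m/m) − 1, the exact embedding constants satisfy lim_{m → ∞} k₀[N^{(m)}] = 1, where k₀[N^{(m)}] = β₀^{-1/m} and β₀ ∈ (0, 1) is the unique solution of G(β₀) = 2. Consequently, since k₀[N] ≥ 1 for every Young–Orlicz function N with J(N) < ∞ (because ‖f‖_{wL(N)} ≤ ‖f‖_{sL(N)} always), the infimum of k₀[N] over all Young–Orlicz functions N with J(N) < ∞ equals 1. -/
open MeasureTheory ENNReal Set Filter Topology

lemma lintegral_image_cv {s : Set ℝ} {f f' : ℝ → ℝ} (hs : MeasurableSet s)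
    (hf' : ∀ x ∈ s, HasDerivWithinAt f (f' x) s x) (hf : InjOn f s) (g : ℝ → ℝ≥0∞) :
    ∫⁻ x in f '' s, g x = ∫⁻ x in s, ENNReal.ofReal |f' x| * g (f x) := by
  simpa only [ContinuousLinearMap.det_toSpanSingleton] using
    lintegral_image_eq_lintegral_abs_det_fderiv_mul volume hs
      (fun x hx => (hf' x hx).hasFDerivWithinAt) hf g

lemma base_integral : ∫⁻ z in Set.Ioo (0:ℝ) (1/2), ENNReal.ofReal ((1 - z) ^ (-(2:ℝ))) = 1 := by
  have hcong : ∀ z ∈ Set.Ioo (0:ℝ) (1/2),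
      ENNReal.ofReal ((1 - z) ^ (-(2:ℝ))) = ENNReal.ofReal (((1 - z) ^ (2:ℕ))⁻¹) := by
    intro z hz
    rw [Real.rpow_neg (by linarith [hz.2] : (0:ℝ) ≤ 1 - z),
      show (2:ℝ) = ((2:ℕ):ℝ) by norm_num, Real.rpow_natCast]
  rw [setLIntegral_congr_fun measurableSet_Ioo hcong]
  have hderiv : ∀ z ∈ Set.uIcc (0:ℝ) (1/2),
      HasDerivAt (fun z : ℝ => (1 - z)⁻¹) (((1 - z) ^ (2:ℕ))⁻¹) z := by
    intro z hz
    rw [Set.uIcc_of_le (by norm_num : (0:ℝ) ≤ 1/2)] at hz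
    have h1 : (1:ℝ) - z ≠ 0 := by
      have h2 := hz.2; intro h; nlinarith
    have hd := ((hasDerivAt_id z).const_sub 1).inv h1
    refine hd.congr_deriv ?_
    simp only [id]; ring
  have hcont : ContinuousOn (fun z : ℝ => ((1 - z) ^ (2:ℕ))⁻¹) (Set.uIcc (0:ℝ) (1/2)) := by
    apply ContinuousOn.inv₀
    · fun_prop
    · intro z hz
      rw [Set.uIcc_of_le (by norm_num : (0:ℝ) ≤ 1/2)] at hz
      have h2 := hz.2
      exact ne_of_gt (by nlinarith)
  have hInt : IntervalIntegrable (fun z : ℝ => ((1 - z) ^ (2:ℕ))⁻¹) volume 0 (1/2) :=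
    hcont.intervalIntegrable
  have hFTC := intervalIntegral.integral_eq_sub_of_hasDerivAt
    (fun z hz => hderiv z (by rwa [Set.uIcc_of_le (by norm_num : (0:ℝ) ≤ 1/2)] at hz ⊢)) hInt
  have hval : ∫ z in (0:ℝ)..(1/2), ((1 - z) ^ (2:ℕ))⁻¹ = 1 := by
    rw [hFTC]; norm_num
  have hIoo : ∫ z in Set.Ioo (0:ℝ) (1/2), ((1 - z) ^ (2:ℕ))⁻¹ = 1 := by
    rw [← MeasureTheory.integral_Ioc_eq_integral_Ioo,
      ← intervalIntegral.integral_of_le (by norm_num : (0:ℝ) ≤ 1/2)]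
    exact hval
  have hIntOn : IntegrableOn (fun z : ℝ => ((1 - z) ^ (2:ℕ))⁻¹) (Set.Ioo (0:ℝ) (1/2)) := by
    exact hInt.1.mono_set Set.Ioo_subset_Ioc_self
  rw [← ofReal_integral_eq_lintegral_ofReal hIntOn]
  · rw [hIoo]; norm_num
  · filter_upwards [ae_restrict_mem measurableSet_Ioo] with z hz
    have := hz.2; positivity

lemma key_integral (β : ℝ) (hβ : β ∈ Set.Ioo (0:ℝ) 1) (hG : Gfun β = 2) :
    ∫⁻ w in Set.Ioi (1:ℝ), ENNReal.ofReal (((1+w) ^ β - 1) / w ^ 2) = 1 := by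
  have himg : (fun z : ℝ => (1 - z)/z) '' Set.Ioo 0 (1/2) = Set.Ioi (1:ℝ) := by
    ext w
    constructor
    · rintro ⟨z, hz, rfl⟩
      have h1 := hz.1; have h2 := hz.2
      rw [Set.mem_Ioi, lt_div_iff₀ h1]; linarith
    · intro hw
      rw [Set.mem_Ioi] at hw
      refine ⟨1/(1+w), ⟨by positivity, ?_⟩, ?_⟩
      · rw [div_lt_div_iff₀ (by linarith) (by norm_num)]; linarith
      · field_simp; ring
  have hderiv : ∀ z ∈ Set.Ioo (0:ℝ) (1/2),
      HasDerivWithinAt (fun z : ℝ => (1 - z)/z) (-(z^2)⁻¹) (Set.Ioo (0:ℝ) (1/2)) z := by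
    intro z hz
    have hz0 : z ≠ 0 := ne_of_gt hz.1
    have hd := ((hasDerivAt_id z).const_sub 1).div (hasDerivAt_id z) hz0
    refine HasDerivAt.hasDerivWithinAt ?_
    refine hd.congr_deriv ?_
    simp only [id]; ring
  have hinj : Set.InjOn (fun z : ℝ => (1 - z)/z) (Set.Ioo 0 (1/2)) := by
    intro a ha b hb h
    have ha0 : a ≠ 0 := ne_of_gt ha.1
    have hb0 : b ≠ 0 := ne_of_gt hb.1
    field_simp at h
    nlinarith [h]
  rw [← himg, lintegral_image_cv measurableSet_Ioo hderiv hinj]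
  have hpt : ∀ z ∈ Set.Ioo (0:ℝ) (1/2),
      ENNReal.ofReal |(-(z^2)⁻¹)| * ENNReal.ofReal (((1 + (1-z)/z) ^ β - 1) / ((1-z)/z) ^ 2)
        = ENNReal.ofReal ((1 - z) ^ (-(2:ℝ)) * z ^ (-β)) - ENNReal.ofReal ((1 - z) ^ (-(2:ℝ))) := by
    intro z hz
    have hz0 : (0:ℝ) < z := hz.1
    have hz1 : (0:ℝ) < 1 - z := by linarith [hz.2]
    have h1 : 1 + (1-z)/z = z⁻¹ := by field_simp; ring
    have h2 : (z⁻¹) ^ β = z ^ (-β) := by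
      rw [Real.inv_rpow hz0.le, ← Real.rpow_neg hz0.le]
    have h3 : (1 - z) ^ (-(2:ℝ)) = ((1 - z) ^ (2:ℕ))⁻¹ := by
      rw [Real.rpow_neg hz1.le, show (2:ℝ) = ((2:ℕ):ℝ) by norm_num, Real.rpow_natCast]
    have habs : |(-(z^2)⁻¹)| = (z^2)⁻¹ := by
      rw [abs_neg, abs_of_pos (by positivity)]
    have ht1 : (1:ℝ) ≤ z ^ (-β) :=
      Real.one_le_rpow_of_pos_of_le_one_of_nonpos hz0 (by linarith [hz.2]) (by linarith [hβ.1])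
    rw [habs, h1, h2, ← ENNReal.ofReal_mul (by positivity),
      ← ENNReal.ofReal_sub _ (by positivity)]
    congr 1
    rw [h3]
    have hne : ((1:ℝ) - z) ≠ 0 := ne_of_gt hz1
    have hzne : z ≠ 0 := ne_of_gt hz0
    field_simp
  rw [setLIntegral_congr_fun measurableSet_Ioo hpt]
  have hmeas : Measurable fun z : ℝ => ENNReal.ofReal ((1 - z) ^ (-(2:ℝ))) := by
    fun_prop
  have hle : (fun z : ℝ => ENNReal.ofReal ((1 - z) ^ (-(2:ℝ))))
      ≤ᵐ[volume.restrict (Set.Ioo (0:ℝ) (1/2))]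
      fun z : ℝ => ENNReal.ofReal ((1 - z) ^ (-(2:ℝ)) * z ^ (-β)) := by
    filter_upwards [ae_restrict_mem measurableSet_Ioo] with z hz
    apply ENNReal.ofReal_le_ofReal
    have hz0 : (0:ℝ) < z := hz.1
    have ht1 : (1:ℝ) ≤ z ^ (-β) :=
      Real.one_le_rpow_of_pos_of_le_one_of_nonpos hz0 (by linarith [hz.2]) (by linarith [hβ.1])
    have hB : (0:ℝ) ≤ (1 - z) ^ (-(2:ℝ)) := Real.rpow_nonneg (by linarith [hz.2]) _
    nlinarith
  rw [lintegral_sub hmeas (by rw [base_integral]; exact one_ne_top) hle]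
  have : (∫⁻ z in Set.Ioo (0:ℝ) (1/2),
      ENNReal.ofReal ((1 - z) ^ (-(2:ℝ)) * z ^ (-β))) = Gfun β := rfl
  rw [this, hG, base_integral]
  rw [← one_add_one_eq_two, ENNReal.add_sub_cancel_right one_ne_top]

lemma Ninv_exp {m : ℝ} (hm : 1 < m) {w : ℝ} (hw : 0 < w) :
    Ninv (fun u : ℝ => Real.exp (|u| ^ m / m) - 1) w = (m * Real.log (1+w)) ^ (1/m) := by
  have hm0 : (0:ℝ) < m := by linarith
  have hL : 0 < Real.log (1+w) := Real.log_pos (by linarith)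
  set u₀ := (m * Real.log (1+w)) ^ (1/m) with hu₀
  have hu₀pos : 0 < u₀ := Real.rpow_pos_of_pos (by positivity) _
  have hset : {u : ℝ | 0 ≤ u ∧ w ≤ Real.exp (|u| ^ m / m) - 1} = Set.Ici u₀ := by
    ext u
    simp only [Set.mem_setOf_eq, Set.mem_Ici]
    constructor
    · rintro ⟨hu, hwu⟩
      rw [abs_of_nonneg hu] at hwu
      have h1 : 1 + w ≤ Real.exp (u ^ m / m) := by linarith
      have h2 : Real.log (1+w) ≤ u ^ m / m := (Real.log_le_iff_le_exp (by linarith)).2 h1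
      have h3 : m * Real.log (1+w) ≤ u ^ m := by
        rw [le_div_iff₀ hm0] at h2; linarith
      calc u₀ ≤ (u ^ m) ^ (1/m) := Real.rpow_le_rpow (by positivity) h3 (by positivity)
        _ = u := by
          rw [← Real.rpow_mul hu, mul_one_div_cancel hm0.ne', Real.rpow_one]
    · intro hu
      have hu0 : (0:ℝ) ≤ u := le_trans hu₀pos.le hu
      refine ⟨hu0, ?_⟩
      rw [abs_of_nonneg hu0]
      have h3 : m * Real.log (1+w) ≤ u ^ m := by
        have h4 : u₀ ^ m ≤ u ^ m := Real.rpow_le_rpow hu₀pos.le hu hm0.le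
        rwa [hu₀, ← Real.rpow_mul (by positivity), one_div,
          inv_mul_cancel₀ hm0.ne', Real.rpow_one] at h4
      have h2 : Real.log (1+w) ≤ u ^ m / m := by rw [le_div_iff₀ hm0]; linarith
      have h1 : 1 + w ≤ Real.exp (u ^ m / m) := (Real.log_le_iff_le_exp (by linarith)).1 h2
      linarith
  rw [Ninv, hset, csInf_Ici]

lemma Qfun_exp {X : Type*} [MeasurableSpace X] (μ : MeasureTheory.Measure X)
    [MeasureTheory.IsProbabilityMeasure μ]
    {m : ℝ} (hm : 1 < m) {β : ℝ} (hβ : β ∈ Set.Ioo (0:ℝ) 1) :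
    Qfun μ (fun u : ℝ => Real.exp (|u| ^ m / m) - 1) (β ^ (-(1/m))) =
      ∫⁻ w in Set.Ioi (1:ℝ), ENNReal.ofReal (((1+w) ^ β - 1) / w ^ 2) := by
  have hμ : ((μ Set.univ)⁻¹.toReal) = 1 := by simp
  rw [Qfun, hμ]
  apply setLIntegral_congr_fun measurableSet_Ioi
  intro w hw
  rw [Set.mem_Ioi] at hw
  have hw0 : (0:ℝ) < w := lt_trans one_pos hw
  have hm0 : (0:ℝ) < m := by linarith
  have hβ0 := hβ.1
  set L := Real.log (1+w) with hLdef
  have hL : 0 < L := Real.log_pos (by linarith)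
  have hnum : Real.exp (|((m * L) ^ (1/m)) / (β ^ (-(1/m)))| ^ m / m) - 1
      = (1+w) ^ β - 1 := by
    have hk : ((m * L) ^ (1/m)) / (β ^ (-(1/m))) = (β * (m * L)) ^ (1/m) := by
      rw [Real.rpow_neg hβ0.le, div_eq_mul_inv, inv_inv,
        ← Real.mul_rpow (by positivity) hβ0.le, mul_comm]
    rw [hk, abs_of_nonneg (Real.rpow_nonneg (by positivity) _),
      ← Real.rpow_mul (by positivity), one_div, inv_mul_cancel₀ hm0.ne', Real.rpow_one]
    have : β * (m * L) / m = L * β := by field_simp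
    rw [this, Real.rpow_def_of_pos (by linarith : (0:ℝ) < 1 + w) β]
  dsimp only
  rw [Ninv_exp hm hw0, hnum]

lemma isYoungOrlicz_exp {m : ℝ} (hm : 1 < m) :
    IsYoungOrlicz (fun u : ℝ => Real.exp (|u| ^ m / m) - 1) := by
  have hm0 : (0:ℝ) < m := by linarith
  have hcontpow : Continuous fun u : ℝ => |u| ^ m :=
    (continuous_iff_continuousAt.2 fun x =>
      Real.continuousAt_rpow_const x m (Or.inr hm0.le)).comp continuous_abs
  constructor
  · intro u; rw [abs_neg]
  · exact (Real.continuous_exp.comp (hcontpow.div_const m)).sub continuous_const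
  · refine ⟨convex_univ, fun x _ y _ a b ha hb hab => ?_⟩
    have habs : |a • x + b • y| ≤ a * |x| + b * |y| := by
      calc |a • x + b • y| ≤ |a • x| + |b • y| := abs_add_le _ _
        _ = a * |x| + b * |y| := by
          rw [smul_eq_mul, smul_eq_mul, abs_mul, abs_mul,
            abs_of_nonneg ha, abs_of_nonneg hb]
    have hpow : |a • x + b • y| ^ m ≤ a * |x| ^ m + b * |y| ^ m := by
      calc |a • x + b • y| ^ m ≤ (a * |x| + b * |y|) ^ m :=
            Real.rpow_le_rpow (abs_nonneg _) habs hm0.le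
        _ ≤ a * |x| ^ m + b * |y| ^ m := by
            have := (convexOn_rpow hm.le).2 (Set.mem_Ici.2 (abs_nonneg x))
              (Set.mem_Ici.2 (abs_nonneg y)) ha hb hab
            simpa [smul_eq_mul] using this
    have hexp : Real.exp (|a • x + b • y| ^ m / m)
        ≤ a * Real.exp (|x| ^ m / m) + b * Real.exp (|y| ^ m / m) := by
      calc Real.exp (|a • x + b • y| ^ m / m)
          ≤ Real.exp (a * (|x| ^ m / m) + b * (|y| ^ m / m)) := by
            apply Real.exp_le_exp.2
            have heq : a * (|x| ^ m / m) + b * (|y| ^ m / m)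
                = (a * |x| ^ m + b * |y| ^ m) / m := by ring
            rw [heq]
            gcongr
        _ ≤ a * Real.exp (|x| ^ m / m) + b * Real.exp (|y| ^ m / m) := by
            have := convexOn_exp.2 (Set.mem_univ (|x| ^ m / m))
              (Set.mem_univ (|y| ^ m / m)) ha hb hab
            simpa [smul_eq_mul] using this
    simp only [smul_eq_mul]
    have : a * (Real.exp (|x| ^ m / m) - 1) + b * (Real.exp (|y| ^ m / m) - 1)
        = a * Real.exp (|x| ^ m / m) + b * Real.exp (|y| ^ m / m) - 1 := by
      rw [mul_sub, mul_sub]; linarith [hab]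
    simp only [smul_eq_mul] at hexp
    linarith [hexp]
  · intro u
    have : (1:ℝ) ≤ Real.exp (|u| ^ m / m) := Real.one_le_exp (by positivity)
    linarith
  · intro a ha b hb hab
    simp only [Set.mem_Ici] at ha hb
    have h1 : a ^ m < b ^ m := Real.rpow_lt_rpow ha hab hm0
    show Real.exp (|a| ^ m / m) - 1 < Real.exp (|b| ^ m / m) - 1
    rw [abs_of_nonneg ha, abs_of_nonneg hb]
    have h2 : a ^ m / m < b ^ m / m := by gcongr
    linarith [Real.exp_lt_exp.2 h2]
  · -- tendsto_atTop
    have h1 : Filter.Tendsto (fun u : ℝ => |u| ^ m / m) Filter.atTop Filter.atTop := by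
      apply Filter.Tendsto.atTop_div_const hm0
      exact (tendsto_rpow_atTop hm0).comp tendsto_abs_atTop_atTop
    have h2 := (Real.tendsto_exp_atTop.comp h1)
    exact tendsto_atTop_add_const_right _ (-1) h2 |>.congr (fun u => by
      simp [Function.comp, sub_eq_add_neg])
  · -- tendsto_div_zero
    have hbound : ∀ᶠ u in nhdsWithin (0:ℝ) (Set.Ioi 0),
        (Real.exp (|u| ^ m / m) - 1) / u ∈ Set.Icc 0 ((3/m) * u ^ (m - 1)) := by
      filter_upwards [Ioo_mem_nhdsGT_of_mem (Set.left_mem_Ico.2 one_pos),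
        self_mem_nhdsWithin] with u hu hu'
      have hu0 : (0:ℝ) < u := hu'
      have hu1 : u < 1 := hu.2
      have habs : |u| = u := abs_of_pos hu0
      have hx0 : (0:ℝ) ≤ u ^ m / m := by positivity
      have hum1 : u ^ m ≤ 1 := Real.rpow_le_one hu0.le hu1.le hm0.le
      have hx1 : u ^ m / m ≤ 1 := by rw [div_le_one hm0]; linarith
      have hexp3 : Real.exp (u ^ m / m) ≤ 3 := by
        calc Real.exp (u ^ m / m) ≤ Real.exp 1 := Real.exp_le_exp.2 hx1
          _ ≤ 3 := by linarith [Real.exp_one_lt_d9.le]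
      have h1 : 1 + -(u ^ m / m) ≤ Real.exp (-(u ^ m / m)) := by
        have := Real.add_one_le_exp (-(u ^ m / m)); linarith
      have h2 : Real.exp (-(u ^ m / m)) * Real.exp (u ^ m / m) = 1 := by
        rw [← Real.exp_add]; simp
      have h3 := mul_le_mul_of_nonneg_right h1 (Real.exp_pos (u ^ m / m)).le
      have hkey : Real.exp (u ^ m / m) - 1 ≤ (u ^ m / m) * Real.exp (u ^ m / m) := by
        nlinarith [h3, h2]
      have hN3 : Real.exp (u ^ m / m) - 1 ≤ 3 * (u ^ m / m) := by
        nlinarith [hkey, hexp3, hx0]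
      constructor
      · apply div_nonneg _ hu0.le
        have : (1:ℝ) ≤ Real.exp (|u| ^ m / m) := Real.one_le_exp (by positivity)
        linarith
      · rw [habs, div_le_iff₀ hu0]
        have hrw : u ^ (m - 1) = u ^ m / u := by rw [Real.rpow_sub hu0, Real.rpow_one]
        rw [hrw]
        calc Real.exp (u ^ m / m) - 1 ≤ 3 * (u ^ m / m) := hN3
          _ = 3 / m * (u ^ m / u) * u := by
            field_simp
    have htend : Filter.Tendsto (fun u : ℝ => (3/m) * u ^ (m - 1))
        (nhdsWithin (0:ℝ) (Set.Ioi 0)) (nhds 0) := by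
      have hc : ContinuousAt (fun u : ℝ => u ^ (m - 1)) 0 :=
        Real.continuousAt_rpow_const 0 (m-1) (Or.inr (by linarith))
      have h0 : (0:ℝ) ^ (m - 1) = 0 := Real.zero_rpow (by intro h; linarith [h]; )
      have h5 := ((hc.tendsto.mono_left (nhdsWithin_le_nhds (s := Set.Ioi (0:ℝ))))).const_mul (3/m)
      rw [h0, mul_zero] at h5
      exact h5
    apply tendsto_of_tendsto_of_tendsto_of_le_of_le' tendsto_const_nhds htend
    · filter_upwards [hbound] with u hu using hu.1
    · filter_upwards [hbound] with u hu using hu.2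
  · -- tendsto_div_atTop
    refine tendsto_atTop_mono' Filter.atTop ?_ (Filter.Tendsto.atTop_div_const hm0
      (tendsto_rpow_atTop (by linarith : (0:ℝ) < m - 1)))
    filter_upwards [Filter.eventually_ge_atTop (1:ℝ)] with u hu
    have hu0 : (0:ℝ) < u := lt_of_lt_of_le one_pos hu
    have habs : |u| = u := abs_of_pos hu0
    have hkey : u ^ m / m ≤ Real.exp (u ^ m / m) - 1 := by
      have := Real.add_one_le_exp (u ^ m / m); linarith
    show u ^ (m - 1) / m ≤ (Real.exp (|u| ^ m / m) - 1) / u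
    rw [habs]
    have hrw : u ^ (m - 1) / m = (u ^ m / m) / u := by
      rw [Real.rpow_sub hu0, Real.rpow_one]; ring
    rw [hrw]
    gcongr

theorem kZero_infimum_eq_one
    {X : Type*} [MeasurableSpace X] (μ : MeasureTheory.Measure X)
    [MeasureTheory.IsProbabilityMeasure μ]
    (β₀ : ℝ) (hβ₀ : β₀ ∈ Set.Ioo (0:ℝ) 1) (hG : Gfun β₀ = 2) :
    (∀ m : ℝ, 1 < m → 1 < β₀ ^ (-(1/m)) ∧
        Qfun μ (fun u : ℝ => Real.exp (|u| ^ m / m) - 1) (β₀ ^ (-(1/m))) = 1) ∧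
    Filter.Tendsto (fun m : ℝ => β₀ ^ (-(1/m))) Filter.atTop (nhds 1) ∧
    (∀ (N : ℝ → ℝ) (k : ℝ), IsYoungOrlicz N → 1 < k ∧ Qfun μ N k = 1 → 1 ≤ k) ∧
    sInf {k : ℝ | ∃ N : ℝ → ℝ, IsYoungOrlicz N ∧
        (∃ c : ℝ, 0 < c ∧ Qfun μ N c < ⊤) ∧ 1 < k ∧ Qfun μ N k = 1} = 1 := by
  obtain ⟨hβ0, hβ1⟩ := hβ₀
  have part1 : ∀ m : ℝ, 1 < m → 1 < β₀ ^ (-(1/m)) ∧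
      Qfun μ (fun u : ℝ => Real.exp (|u| ^ m / m) - 1) (β₀ ^ (-(1/m))) = 1 := by
    intro m hm
    constructor
    · exact (Real.one_lt_rpow_iff_of_pos hβ0).2 (Or.inr ⟨hβ1,
        neg_lt_zero.2 (by positivity)⟩)
    · rw [Qfun_exp μ hm ⟨hβ0, hβ1⟩]
      exact key_integral β₀ ⟨hβ0, hβ1⟩ hG
  have part2 : Filter.Tendsto (fun m : ℝ => β₀ ^ (-(1/m))) Filter.atTop (nhds 1) := by
    have h1 : Filter.Tendsto (fun m : ℝ => -(1/m)) Filter.atTop (nhds 0) := by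
      have h0 := tendsto_inv_atTop_zero (𝕜 := ℝ)
      have := h0.neg
      rw [neg_zero] at this
      simpa [one_div] using this
    have h2 : ContinuousAt (fun y : ℝ => β₀ ^ y) 0 :=
      Real.continuousAt_const_rpow hβ0.ne'
    have h3 := h2.tendsto.comp h1
    simpa [Real.rpow_zero, Function.comp_def] using h3
  refine ⟨part1, part2, fun N k _ hk => hk.1.le, ?_⟩
  set S := {k : ℝ | ∃ N : ℝ → ℝ, IsYoungOrlicz N ∧
      (∃ c : ℝ, 0 < c ∧ Qfun μ N c < ⊤) ∧ 1 < k ∧ Qfun μ N k = 1} with hS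
  have hmem : ∀ m : ℝ, 1 < m → β₀ ^ (-(1/m)) ∈ S := by
    intro m hm
    exact ⟨fun u => Real.exp (|u| ^ m / m) - 1, isYoungOrlicz_exp hm,
      ⟨β₀ ^ (-(1/m)), Real.rpow_pos_of_pos hβ0 _,
        by rw [(part1 m hm).2]; exact one_lt_top⟩, (part1 m hm).1, (part1 m hm).2⟩
  have hlb : ∀ k ∈ S, (1:ℝ) ≤ k := by
    rintro k ⟨N, _, _, h1, _⟩; linarith
  apply le_antisymm
  · have hev : ∀ᶠ m : ℝ in Filter.atTop, sInf S ≤ β₀ ^ (-(1/m)) := by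
      filter_upwards [Filter.eventually_gt_atTop (1:ℝ)] with m hm
      exact csInf_le ⟨1, fun k hk => hlb k hk⟩ (hmem m hm)
    exact ge_of_tendsto part2 hev
  · exact le_csInf ⟨_, hmem 2 one_lt_two⟩ hlb
end
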